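/- Let b ≥ 2 and n ≥ 1 be integers, let R_n be a generalized Hammersley point set, let j₁ ∈ ℕ₀ with j₁ ≤ n − 1, m₁ ∈ {0,…,b^{j₁}−1} and ℓ₁ ∈ {1,…,b−1}. For z ∈ R_n with z₁ ∈ I_{j₁,m₁}, let k₁(z) ∈ {0,…,b−1} be the unique digit with z₁ ∈ [b^{−j₁−1}(bm₁+k₁(z)), b^{−j₁−1}(bm₁+k₁(z)+1)). Write S := ∑_{z ∈ R_n, z₁ ∈ I_{j₁,m₁}} [(bm₁+k₁(z)+1−b^{j₁+1}z₁)·exp(2πik₁(z)ℓ₁/b) + ∑_{r₁=k₁(z)+1}^{b−1} exp(2πir₁ℓ₁/b)] · (1 − z₂) and e := exp(2πiℓ₁/b). Then there exists a real number ε with 0 ≤ ε and ε·b^{n−j₁} ≤ b such that either S = (b^{n−j₁}(1−2ε) − b^{j₁−n+1})/(2(e−1)) + e/(e−1)², or S = (b^{n−j₁}(1−2ε) + b^{j₁−n+1})/(2(e−1)) − 1/(e−1)². -/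

import Mathlib

open scoped Classical
open Finset

/-- `bexp b ℓ k = exp(2πiℓk/b)`. -/
noncomputable def bexp (b ℓ k : ℕ) : ℂ :=
  Complex.exp (2 * Real.pi * Complex.I * ℓ * k / b)

/-- First coordinate of the generalized Hammersley point: `z₁ = tₙ/b + ⋯ + t₁/bⁿ`. -/
noncomputable def z1 (b n : ℕ) (t : Fin n → Fin b) : ℝ :=
  ∑ i : Fin n, ((t i : ℕ) : ℝ) / (b:ℝ) ^ (n - (i:ℕ))

/-- Second coordinate: `z₂ = s₁(t₁)/b + s₂(t₂)/b² + ⋯ + sₙ(tₙ)/bⁿ`. -/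
noncomputable def z2 (b n : ℕ) (s : Fin n → ℕ → ℕ) (t : Fin n → Fin b) : ℝ :=
  ∑ i : Fin n, ((s i (t i : ℕ) : ℕ) : ℝ) / (b:ℝ) ^ ((i:ℕ) + 1)

/-- Each `s i` is either the identity or the reflection `t ↦ b−1−t` on digits. -/
def IsDigitMaps (b n : ℕ) (s : Fin n → ℕ → ℕ) : Prop :=
  ∀ i, (∀ k, k < b → s i k = k) ∨ (∀ k, k < b → s i k = b - 1 - k)

/-- The unique digit `k ∈ {0,…,b−1}` with `x ∈ [b^{−j−1}(bm+k), b^{−j−1}(bm+k+1))`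
(for `x ∈ I_{j,m}`): `k = ⌊b^{j+1}x⌋ mod b`. -/
noncomputable def kdig (b j : ℕ) (x : ℝ) : ℕ := (⌊(b:ℝ) ^ (j + 1) * x⌋).toNat % b

/-- The sum `S` of Lemma 4.10: over all points `z` of the generalized Hammersley point set
with `z₁ ∈ I_{j₁,m₁}`, of `[(bm₁+k₁(z)+1−b^{j₁+1}z₁)·e(k₁(z)ℓ₁) + ∑_{r₁>k₁(z)} e(r₁ℓ₁)]·(1−z₂)`. -/
noncomputable def S13 (b n : ℕ) (s : Fin n → ℕ → ℕ) (j₁ m₁ ℓ₁ : ℕ) : ℂ :=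
  ∑ t ∈ Finset.univ.filter (fun t : Fin n → Fin b =>
      (b:ℝ)^(-(j₁:ℤ)) * m₁ ≤ z1 b n t ∧ z1 b n t < (b:ℝ)^(-(j₁:ℤ)) * (m₁ + 1)),
    (((b:ℂ)*m₁ + (kdig b j₁ (z1 b n t) : ℂ) + 1 - (b:ℂ)^(j₁+1) * (z1 b n t : ℝ)) *
        bexp b ℓ₁ (kdig b j₁ (z1 b n t)) +
       ∑ r₁ ∈ Finset.Icc (kdig b j₁ (z1 b n t) + 1) (b-1), bexp b ℓ₁ r₁) *
      (1 - ((z2 b n s t : ℝ) : ℂ))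

namespace SMB

/-! ### Base-`b` digit arithmetic -/

/-- digit `i` of `N` in base `b`. -/
def dig (b i N : ℕ) : ℕ := N / b ^ i % b

lemma dig_lt {b : ℕ} (hb : 0 < b) (i N : ℕ) : dig b i N < b := Nat.mod_lt _ hb

lemma dig_succ (b i N : ℕ) : dig b (i + 1) N = dig b i (N / b) := by
  unfold dig
  rw [pow_succ', Nat.div_div_eq_div_mul]

lemma dig_add_low {b : ℕ} (hb : 0 < b) {j i q r : ℕ} (hij : i < j) :
    dig b i (b ^ j * q + r) = dig b i r := by
  unfold dig
  obtain ⟨d, hd⟩ : ∃ d, j = i + (d + 1) := ⟨j - i - 1, by omega⟩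
  subst hd
  rw [show b ^ (i + (d+1)) * q + r = b ^ i * (b * (b ^ d * q)) + r by ring,
    Nat.mul_add_div (pow_pos hb i), Nat.mul_add_mod]

lemma dig_add_high {b : ℕ} (hb : 0 < b) {j i q r : ℕ} (hr : r < b ^ j) :
    dig b (j + i) (b ^ j * q + r) = dig b i q := by
  unfold dig
  rw [pow_add, ← Nat.div_div_eq_div_mul]
  congr 2
  rw [Nat.add_comm, Nat.add_mul_div_left _ _ (pow_pos hb j), Nat.div_eq_of_lt hr,
    Nat.zero_add]

lemma reconstruct {b : ℕ} (hb : 0 < b) : ∀ (n N : ℕ), N < b ^ n →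
    ∑ i ∈ range n, b ^ i * dig b i N = N := by
  intro n
  induction n with
  | zero => intro N hN; simp at hN; simp [hN]
  | succ n ih =>
    intro N hN
    rw [Finset.sum_range_succ']
    have h2 : ∑ i ∈ range n, b ^ (i+1) * dig b (i+1) N
        = b * ∑ i ∈ range n, b ^ i * dig b i (N / b) := by
      rw [Finset.mul_sum]
      refine Finset.sum_congr rfl fun i _ => ?_
      rw [dig_succ, pow_succ']; ring
    have h3 : N / b < b ^ n := by
      rw [Nat.div_lt_iff_lt_mul hb]
      calc N < b ^ (n+1) := hN
      _ = b ^ n * b := by rw [pow_succ]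
    rw [h2, ih _ h3]
    simpa [dig] using Nat.div_add_mod N b

lemma sum_range_mul {M : Type*} [AddCommMonoid M] (a c : ℕ) (F : ℕ → M) :
    ∑ m ∈ range (a * c), F m = ∑ q ∈ range a, ∑ r ∈ range c, F (c * q + r) := by
  induction a with
  | zero => simp
  | succ a ih =>
    rw [Nat.succ_mul, Finset.sum_range_add, ih, Finset.sum_range_succ]
    congr 1
    exact Finset.sum_congr rfl fun r _ => by rw [mul_comm c a]

lemma sum_digits_lt {b : ℕ} (hb : 0 < b) (d : ℕ → ℕ) :
    ∀ k, (∀ i, i < k → d i < b) → ∑ i ∈ range k, b ^ i * d i < b ^ k := by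
  intro k
  induction k with
  | zero => intro _; simpa using Nat.pos_pow_of_pos 0 hb
  | succ k ih =>
    intro hd
    rw [Finset.sum_range_succ]
    have h1 : ∑ i ∈ range k, b ^ i * d i < b ^ k := ih (fun i hi => hd i (by omega))
    have h2 : b ^ k * d k ≤ b ^ k * (b - 1) :=
      Nat.mul_le_mul_left _ (by have := hd k (by omega); omega)
    have h3 : b ^ k * (b - 1) = b ^ k * b - b ^ k := by rw [Nat.mul_sub, Nat.mul_one]
    have h4 : b ^ k ≤ b ^ k * b := Nat.le_mul_of_pos_right _ hb
    have h5 : b ^ (k + 1) = b ^ k * b := pow_succ b k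
    omega

lemma dig_sum {b : ℕ} (hb : 0 < b) (n : ℕ) (d : ℕ → ℕ) (hd : ∀ i, i < n → d i < b)
    {k : ℕ} (hk : k < n) :
    dig b k (∑ i ∈ range n, b ^ i * d i) = d k := by
  obtain ⟨m, hm⟩ : ∃ m, n = k + (m + 1) := ⟨n - k - 1, by omega⟩
  have hsplit : ∑ i ∈ range n, b ^ i * d i
      = b ^ k * (d k + b * ∑ i ∈ range m, b ^ i * d (k + 1 + i))
        + ∑ i ∈ range k, b ^ i * d i := by
    rw [hm, Finset.sum_range_add, Finset.sum_range_succ']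
    have h1 : ∀ i ∈ range m, b ^ (k + (i+1)) * d (k + (i+1))
        = b ^ k * (b * (b ^ i * d (k + 1 + i))) := by
      intro i _
      rw [show k + (i+1) = k + 1 + i by ring, pow_add, pow_add]
      ring
    rw [Finset.sum_congr rfl h1]
    simp only [← Finset.mul_sum, Nat.add_zero]
    ring
  rw [hsplit]
  unfold dig
  rw [Nat.mul_add_div (pow_pos hb k),
    Nat.div_eq_of_lt (sum_digits_lt hb d k (fun i hi => hd i (by omega))), Nat.add_zero,
    Nat.add_mul_mod_self_left, Nat.mod_eq_of_lt (hd k (by omega))]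

/-! ### Root-of-unity sums -/

lemma aux_sum_mul_geom (x : ℂ) : ∀ m : ℕ, (x - 1) * ∑ k ∈ range (m+1), (k:ℂ) * x ^ k
    = m * x ^ (m+1) - ∑ k ∈ range (m+1), x ^ k + 1 := by
  intro m
  induction m with
  | zero => simp
  | succ m ih =>
    rw [Finset.sum_range_succ ((fun k : ℕ => (k:ℂ) * x ^ k)) (m+1),
      Finset.sum_range_succ (fun k : ℕ => x ^ k) (m+1)]
    push_cast
    push_cast at ih
    linear_combination ih

lemma geom_zero {b : ℕ} {x : ℂ} (hx1 : x ≠ 1) (hxb : x ^ b = 1) :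
    ∑ k ∈ range b, x ^ k = 0 := by
  rw [geom_sum_eq hx1, hxb, sub_self, zero_div]

lemma sum_k_geom {b : ℕ} {x : ℂ} (hb : 1 ≤ b) (hx1 : x ≠ 1) (hxb : x ^ b = 1) :
    ∑ k ∈ range b, (k:ℂ) * x ^ k = b / (x - 1) := by
  obtain ⟨m, rfl⟩ : ∃ m, b = m + 1 := ⟨b - 1, by omega⟩
  have h := aux_sum_mul_geom x m
  rw [geom_zero hx1 hxb, hxb] at h
  rw [eq_div_iff (sub_ne_zero.mpr hx1)]
  push_cast
  linear_combination h

lemma sum_tail_geom {b : ℕ} {x : ℂ} (hb : 1 ≤ b) (hx1 : x ≠ 1) {k : ℕ} (hk : k < b) :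
    ∑ r ∈ Icc (k+1) (b-1), x ^ r = (1 - x^(k+1)) / (x - 1) + (x ^ b - 1) / (x-1) := by
  have hb' : b - 1 + 1 = b := by omega
  rw [← Finset.Ico_add_one_right_eq_Icc, hb', Finset.sum_Ico_eq_sub _ (by omega),
    geom_sum_eq hx1, geom_sum_eq hx1]
  ring

lemma cast_gauss (m : ℕ) : ∑ k ∈ range m, (k:ℂ) = (m:ℂ) * ((m:ℂ) - 1) / 2 := by
  rcases Nat.eq_zero_or_pos m with rfl | hm
  · simp
  · have h := Finset.sum_range_id_mul_two m
    have h2 := congrArg (Nat.cast : ℕ → ℂ) h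
    push_cast [Nat.cast_sub hm] at h2
    linear_combination h2 / 2

/-- Sum of a function of digit `i` over a full block of integers. -/
lemma sum_dig_block {b : ℕ} (hb : 0 < b) (i a : ℕ) (h : ℕ → ℂ) :
    ∑ M ∈ range (b ^ (a + (i + 1))), h (dig b i M)
      = ((b:ℂ) ^ a * (b:ℂ) ^ i) * ∑ v ∈ range b, h v := by
  rw [show b ^ (a + (i+1)) = b ^ a * b ^ (i+1) from pow_add b a (i+1), sum_range_mul]
  have h1 : ∀ q ∈ range (b ^ a), ∑ r ∈ range (b ^ (i+1)), h (dig b i (b ^ (i+1) * q + r))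
      = (b:ℂ) ^ i * ∑ v ∈ range b, h v := by
    intro q _
    have h2 : ∀ r ∈ range (b ^ (i+1)), h (dig b i (b ^ (i+1) * q + r)) = h (dig b i r) :=
      fun r _ => by rw [dig_add_low hb (by omega)]
    rw [Finset.sum_congr rfl h2, show b ^ (i+1) = b * b ^ i from pow_succ' b i, sum_range_mul]
    have h3 : ∀ v ∈ range b, ∑ r ∈ range (b ^ i), h (dig b i (b ^ i * v + r))
        = (b:ℂ) ^ i * h v := by
      intro v hv
      have h4 : ∀ r ∈ range (b ^ i), h (dig b i (b ^ i * v + r)) = h v := by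
        intro r hr
        have := dig_add_high hb (i := 0) (q := v) (r := r) (mem_range.mp hr)
        rw [Nat.add_zero] at this
        rw [this]
        unfold dig
        rw [pow_zero, Nat.div_one, Nat.mod_eq_of_lt (mem_range.mp hv)]
      rw [Finset.sum_congr rfl h4, Finset.sum_const, card_range, nsmul_eq_mul]
      push_cast
      ring
    rw [Finset.sum_congr rfl h3, ← Finset.mul_sum]
  rw [Finset.sum_congr rfl h1, Finset.sum_const, card_range, nsmul_eq_mul]
  push_cast
  ring

/-! ### Hammersley points via digits -/

def dval {b n : ℕ} (t : Fin n → Fin b) (i : ℕ) : ℕ :=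
  if h : i < n then (t ⟨i, h⟩ : ℕ) else 0

lemma dval_lt {b n : ℕ} (hb : 0 < b) (t : Fin n → Fin b) (i : ℕ) : dval t i < b := by
  unfold dval
  split
  · exact (t _).isLt
  · exact hb

def natOf (b n : ℕ) (t : Fin n → Fin b) : ℕ := ∑ i ∈ range n, b ^ i * dval t i

def psivec (b n : ℕ) (hb : 0 < b) (N : ℕ) : Fin n → Fin b :=
  fun i => ⟨dig b (i:ℕ) N, dig_lt hb _ _⟩

lemma natOf_lt {b n : ℕ} (hb : 0 < b) (t : Fin n → Fin b) : natOf b n t < b ^ n :=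
  sum_digits_lt hb _ n (fun i _ => dval_lt hb t i)

lemma psivec_natOf {b n : ℕ} (hb : 0 < b) (t : Fin n → Fin b) :
    psivec b n hb (natOf b n t) = t := by
  funext i
  apply Fin.ext
  show dig b (i:ℕ) (natOf b n t) = (t i : ℕ)
  rw [natOf, dig_sum hb n _ (fun j _ => dval_lt hb t j) i.isLt]
  simp [dval, i.isLt]

lemma natOf_psivec {b n : ℕ} (hb : 0 < b) {N : ℕ} (hN : N < b ^ n) :
    natOf b n (psivec b n hb N) = N := by
  unfold natOf
  have h1 : ∀ i ∈ range n, b ^ i * dval (psivec b n hb N) i = b ^ i * dig b i N := by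
    intro i hi
    congr 1
    simp [dval, psivec, mem_range.mp hi]
  rw [Finset.sum_congr rfl h1, reconstruct hb n N hN]

lemma z1_natOf {b n : ℕ} (hb : 0 < b) (t : Fin n → Fin b) :
    z1 b n t = (natOf b n t : ℝ) / (b:ℝ) ^ n := by
  have hbR : (0:ℝ) < (b:ℝ) := by exact_mod_cast hb
  have h0 : z1 b n t = ∑ i ∈ range n, (dval t i : ℝ) / (b:ℝ) ^ (n - i) := by
    rw [← Fin.sum_univ_eq_sum_range (fun i => (dval t i : ℝ) / (b:ℝ) ^ (n - i)) n]
    unfold z1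
    refine Finset.sum_congr rfl fun i _ => ?_
    congr 2
    simp [dval, i.isLt]
  rw [h0, natOf]
  push_cast
  rw [Finset.sum_div]
  refine Finset.sum_congr rfl fun i hi => ?_
  have hin : i < n := mem_range.mp hi
  rw [show (b:ℝ) ^ n = (b:ℝ) ^ (n - i) * (b:ℝ) ^ i from by
    rw [← pow_add]; congr 1; omega]
  rw [div_eq_div_iff (by positivity) (by positivity)]
  ring

def sext (n : ℕ) (s : Fin n → ℕ → ℕ) (i v : ℕ) : ℕ :=
  if h : i < n then s ⟨i, h⟩ v else v

lemma z2_eq {b n : ℕ} (s : Fin n → ℕ → ℕ) (t : Fin n → Fin b) :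
    z2 b n s t = ∑ i ∈ range n, ((sext n s i (dval t i) : ℕ) : ℝ) / (b:ℝ) ^ (i + 1) := by
  rw [← Fin.sum_univ_eq_sum_range (fun i => ((sext n s i (dval t i) : ℕ) : ℝ) / (b:ℝ) ^ (i + 1)) n]
  unfold z2
  refine Finset.sum_congr rfl fun i _ => ?_
  simp [sext, dval, i.isLt]

/-! ### the root of unity `x = exp(2πiℓ/b)` -/

lemma x_pow_b {b ℓ : ℕ} (hb : 0 < b) :
    Complex.exp (2 * Real.pi * Complex.I * ℓ / b) ^ b = 1 := by
  have hb0 : (b:ℂ) ≠ 0 := Nat.cast_ne_zero.mpr hb.ne'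
  rw [← Complex.exp_nat_mul]
  rw [show (b:ℂ) * (2 * (Real.pi:ℂ) * Complex.I * ℓ / b) = ℓ * (2 * (Real.pi:ℂ) * Complex.I)
    from by field_simp]
  exact_mod_cast Complex.exp_int_mul_two_pi_mul_I (ℓ:ℤ)

lemma x_ne_one {b ℓ : ℕ} (hℓ : 1 ≤ ℓ) (hℓb : ℓ < b) :
    Complex.exp (2 * Real.pi * Complex.I * ℓ / b) ≠ 1 := by
  intro h
  rw [Complex.exp_eq_one_iff] at h
  obtain ⟨m, hm⟩ := h
  have hb : 0 < b := by omega
  have hb0 : (b:ℂ) ≠ 0 := Nat.cast_ne_zero.mpr hb.ne'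
  have hpi : (Real.pi:ℂ) ≠ 0 := by exact_mod_cast Real.pi_ne_zero
  have hI := Complex.I_ne_zero
  have h2pi : (2 * (Real.pi:ℂ) * Complex.I) ≠ 0 :=
    mul_ne_zero (mul_ne_zero two_ne_zero hpi) hI
  have h2 : (ℓ:ℂ) = (m:ℂ) * b := by
    field_simp at hm
    have h3 : (2 * (Real.pi:ℂ) * Complex.I) * (ℓ:ℂ)
        = (2 * (Real.pi:ℂ) * Complex.I) * ((m:ℂ) * b) := by
      linear_combination (2 * (Real.pi:ℂ) * Complex.I) * hm
    exact mul_left_cancel₀ h2pi h3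
  have h4 : (ℓ:ℤ) = m * b := by exact_mod_cast h2
  have hbZ : (0:ℤ) < b := by exact_mod_cast hb
  have hℓZ : (1:ℤ) ≤ ℓ := by exact_mod_cast hℓ
  have hℓbZ : (ℓ:ℤ) < b := by exact_mod_cast hℓb
  rcases le_or_gt m 0 with hm0 | hm1
  · nlinarith
  · have hm1' : (1:ℤ) ≤ m := hm1
    nlinarith

lemma bexp_eq {b ℓ : ℕ} (k : ℕ) :
    bexp b ℓ k = Complex.exp (2 * Real.pi * Complex.I * ℓ / b) ^ k := by
  rw [← Complex.exp_nat_mul, bexp]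
  congr 1
  ring

end SMB

lemma SMBfinal_id1 (x B β c D : ℂ) (hx : x - 1 ≠ 0) (hB : B ≠ 0) (hb : β ≠ 0) :
    0 * D + (β/(x-1)) * (1/(β*B)) * (B*(B-1)/2/B - B)
      + (β/(x-1)) * (B*(1-c) - (B-1)/2)
      - ((β*(β-1)/2) * (1/((x-1)*(β*B))) - (β/(x-1)) * (x/((x-1)*(β*B)))) * B
    = (β*B*(1-2*c) - B⁻¹)/(2*(x-1)) + x/(x-1)^2 := by
  rw [zero_mul, zero_add]
  field_simp
  ring

lemma SMBfinal_id2 (x B β c D : ℂ) (hx : x - 1 ≠ 0) (hB : B ≠ 0) (hb : β ≠ 0) :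
    0 * D + (-((β/(x-1)) * (1/(β*B)))) * (B*(B-1)/2/B - B)
      + (β/(x-1)) * (B*(1-c) - (B-1)/2)
      - ((β*(β-1)/2) * (1/((x-1)*(β*B))) + (β/(x-1)) * (x/((x-1)*(β*B)))) * B
    = (β*B*(1-2*c) + B⁻¹)/(2*(x-1)) - 1/(x-1)^2 := by
  rw [zero_mul, zero_add]
  field_simp
  ring

set_option maxHeartbeats 2000000 in
/-- Lemma 4.10. -/
theorem sum_mixed_box (b n : ℕ) (hb : 2 ≤ b) (hn : 1 ≤ n)
    (s : Fin n → ℕ → ℕ) (hs : IsDigitMaps b n s)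
    (j₁ m₁ ℓ₁ : ℕ) (hj : j₁ ≤ n - 1) (hm₁ : m₁ < b ^ j₁)
    (hℓ₁ : 1 ≤ ℓ₁) (hℓ₁' : ℓ₁ ≤ b - 1) :
    ∃ ε : ℝ, 0 ≤ ε ∧ ε * (b:ℝ) ^ ((n:ℤ) - j₁) ≤ b ∧
      (S13 b n s j₁ m₁ ℓ₁
          = ((b:ℂ) ^ ((n:ℤ) - j₁) * (1 - 2*(ε:ℂ)) - (b:ℂ) ^ ((j₁:ℤ) - n + 1)) /
              (2 * (Complex.exp (2 * Real.pi * Complex.I * ℓ₁ / b) - 1))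
            + Complex.exp (2 * Real.pi * Complex.I * ℓ₁ / b) /
              (Complex.exp (2 * Real.pi * Complex.I * ℓ₁ / b) - 1) ^ 2
       ∨ S13 b n s j₁ m₁ ℓ₁
          = ((b:ℂ) ^ ((n:ℤ) - j₁) * (1 - 2*(ε:ℂ)) + (b:ℂ) ^ ((j₁:ℤ) - n + 1)) /
              (2 * (Complex.exp (2 * Real.pi * Complex.I * ℓ₁ / b) - 1))
            - 1 / (Complex.exp (2 * Real.pi * Complex.I * ℓ₁ / b) - 1) ^ 2) := by
  have hb0 : 0 < b := by omega
  have hb1 : 1 ≤ b := by omega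
  have hbR : (0:ℝ) < (b:ℝ) := by exact_mod_cast hb0
  have hbC : (b:ℂ) ≠ 0 := Nat.cast_ne_zero.mpr hb0.ne'
  obtain ⟨g, hng⟩ : ∃ g, n = j₁ + (g + 1) := ⟨n - j₁ - 1, by omega⟩
  set x : ℂ := Complex.exp (2 * Real.pi * Complex.I * ℓ₁ / b) with hxdef
  have hxb : x ^ b = 1 := SMB.x_pow_b hb0
  have hx1 : x ≠ 1 := SMB.x_ne_one hℓ₁ (by omega)
  have hx1' : x - 1 ≠ 0 := sub_ne_zero.mpr hx1
  have hgeom0 : ∑ k ∈ range b, x ^ k = 0 := SMB.geom_zero hx1 hxb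
  have hkx : ∑ k ∈ range b, (k:ℂ) * x ^ k = (b:ℂ) / (x - 1) := SMB.sum_k_geom hb1 hx1 hxb
  set s' : ℕ → ℕ → ℕ := SMB.sext n s with hs'def
  have hs'lt : ∀ i v, i < n → v < b → s' i v < b := by
    intro i v hin hvb
    rcases hs ⟨i, hin⟩ with h | h
    · rw [hs'def]; simp only [SMB.sext, dif_pos hin, h v hvb]; exact hvb
    · rw [hs'def]; simp only [SMB.sext, dif_pos hin, h v hvb]; omega
  set cR : ℝ := ∑ i ∈ range j₁, ((s' (g+1+i) (SMB.dig b i m₁) : ℕ) : ℝ) / (b:ℝ)^(g+2+i)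
    with hcRdef
  have hcR0 : 0 ≤ cR := by
    rw [hcRdef]; positivity
  refine ⟨cR, hcR0, ?_, ?_⟩
  · -- the bound ε * b^(n-j₁) ≤ b
    have hznj : (b:ℝ) ^ ((n:ℤ) - j₁) = (b:ℝ)^(g+1) := by
      rw [show (n:ℤ) - (j₁:ℤ) = ((g+1:ℕ):ℤ) from by push_cast; omega, zpow_natCast]
    rw [hznj]
    have hstep : ∀ i ∈ range j₁, ((s' (g+1+i) (SMB.dig b i m₁) : ℕ) : ℝ) / (b:ℝ)^(g+2+i)
        ≤ 1/(b:ℝ)^(g+1+i) - 1/(b:ℝ)^(g+1+(i+1)) := by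
      intro i hi
      have hin : g+1+i < n := by have := mem_range.mp hi; omega
      have hslt : s' (g+1+i) (SMB.dig b i m₁) < b := hs'lt _ _ hin (SMB.dig_lt hb0 i m₁)
      have hble : ((s' (g+1+i) (SMB.dig b i m₁) : ℕ):ℝ) ≤ (b:ℝ) - 1 := by
        have h9 : ((s' (g+1+i) (SMB.dig b i m₁):ℕ):ℝ) + 1 ≤ (b:ℝ) := by exact_mod_cast hslt
        linarith
      calc ((s' (g+1+i) (SMB.dig b i m₁) : ℕ) : ℝ) / (b:ℝ)^(g+2+i)
          ≤ ((b:ℝ)-1) / (b:ℝ)^(g+2+i) := by gcongr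
        _ = 1/(b:ℝ)^(g+1+i) - 1/(b:ℝ)^(g+1+(i+1)) := by
            rw [show g+1+(i+1) = g+2+i from by omega,
              show (b:ℝ)^(g+2+i) = (b:ℝ)^(g+1+i) * (b:ℝ) from by
                rw [show g+2+i = (g+1+i)+1 from by omega, pow_succ]]
            field_simp
            try ring
    have h1 : cR ≤ 1/(b:ℝ)^(g+1) := by
      have h2 : cR ≤ ∑ i ∈ range j₁, (1/(b:ℝ)^(g+1+i) - 1/(b:ℝ)^(g+1+(i+1))) := by
        rw [hcRdef]; exact Finset.sum_le_sum hstep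
      have h3 : ∑ i ∈ range j₁, (1/(b:ℝ)^(g+1+i) - 1/(b:ℝ)^(g+1+(i+1)))
          = 1/(b:ℝ)^(g+1+0) - 1/(b:ℝ)^(g+1+j₁) :=
        Finset.sum_range_sub' (fun i => 1/(b:ℝ)^(g+1+i)) j₁
      have h4 : (0:ℝ) ≤ 1/(b:ℝ)^(g+1+j₁) := by positivity
      have h5 : (1:ℝ)/(b:ℝ)^(g+1+0) = 1/(b:ℝ)^(g+1) := by norm_num
      linarith
    calc cR * (b:ℝ)^(g+1) ≤ (1/(b:ℝ)^(g+1)) * (b:ℝ)^(g+1) :=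
          mul_le_mul_of_nonneg_right h1 (by positivity)
      _ = 1 := by field_simp
      _ ≤ (b:ℝ) := by exact_mod_cast hb1
  -- main computation
  · have hcond : ∀ t : Fin n → Fin b,
        ((b:ℝ)^(-(j₁:ℤ)) * m₁ ≤ z1 b n t ∧ z1 b n t < (b:ℝ)^(-(j₁:ℤ)) * (m₁ + 1))
          ↔ (m₁ * b^(g+1) ≤ SMB.natOf b n t ∧ SMB.natOf b n t < (m₁+1) * b^(g+1)) := by
      intro t
      rw [SMB.z1_natOf hb0 t]
      have hbj : (b:ℝ)^(-(j₁:ℤ)) = ((b:ℝ)^(j₁:ℕ))⁻¹ := by rw [zpow_neg, zpow_natCast]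
      have hbn : (b:ℝ)^(n:ℕ) = (b:ℝ)^(j₁:ℕ) * (b:ℝ)^(g+1) := by
        rw [← pow_add]; congr 1; try omega
      have hpj : (0:ℝ) < (b:ℝ)^(j₁:ℕ) := by positivity
      have hpg : (0:ℝ) < (b:ℝ)^(g+1) := by positivity
      have hpn : (0:ℝ) < (b:ℝ)^(n:ℕ) := by positivity
      have h4 : ((b:ℝ)^(j₁:ℕ))⁻¹ * (m₁:ℝ) * (b:ℝ)^(n:ℕ) = (m₁:ℝ) * (b:ℝ)^(g+1) := by
        rw [hbn]; field_simp
      have h4' : ((b:ℝ)^(j₁:ℕ))⁻¹ * ((m₁:ℝ)+1) * (b:ℝ)^(n:ℕ) = ((m₁:ℝ)+1) * (b:ℝ)^(g+1) := by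
        rw [hbn]; field_simp
      rw [hbj]
      constructor
      · rintro ⟨h1, h2⟩
        constructor
        · have h3 := mul_le_mul_of_nonneg_right h1 hpn.le
          rw [div_mul_cancel₀ _ hpn.ne', h4] at h3
          exact_mod_cast h3
        · have h3 := mul_lt_mul_of_pos_right h2 hpn
          rw [div_mul_cancel₀ _ hpn.ne', h4'] at h3
          exact_mod_cast h3
      · rintro ⟨h1, h2⟩
        constructor
        · rw [le_div_iff₀ hpn, h4]
          exact_mod_cast h1
        · rw [div_lt_iff₀ hpn, h4']
          exact_mod_cast h2
    have hpow_g1 : 0 < b^(g+1) := pow_pos hb0 _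
    have hbgn : b^(j₁:ℕ) * b^(g+1) = b^n := by rw [← pow_add]; congr 1; omega
    have hNlt' : ∀ M, M < b^(g+1) → m₁ * b^(g+1) + M < b^n := by
      intro M hM
      have h2 : (m₁+1) * b^(g+1) ≤ b^(j₁:ℕ) * b^(g+1) := Nat.mul_le_mul_right _ hm₁
      have h4 : (m₁+1)*b^(g+1) = m₁*b^(g+1) + b^(g+1) := by ring
      omega
    set F : ℕ → ℂ := fun N =>
      (((b:ℂ)*m₁ + (kdig b j₁ ((N:ℝ)/(b:ℝ)^n) : ℂ) + 1
          - (b:ℂ)^(j₁+1) * ((((N:ℝ)/(b:ℝ)^n : ℝ)):ℂ)) * bexp b ℓ₁ (kdig b j₁ ((N:ℝ)/(b:ℝ)^n))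
        + ∑ r₁ ∈ Finset.Icc (kdig b j₁ ((N:ℝ)/(b:ℝ)^n) + 1) (b-1), bexp b ℓ₁ r₁)
        * (1 - ((z2 b n s (SMB.psivec b n hb0 N) : ℝ):ℂ)) with hF
    have hsummand : ∀ N, N < b^n →
        (((b:ℂ)*m₁ + (kdig b j₁ (z1 b n (SMB.psivec b n hb0 N)) : ℂ) + 1
            - (b:ℂ)^(j₁+1) * ((z1 b n (SMB.psivec b n hb0 N) : ℝ):ℂ))
              * bexp b ℓ₁ (kdig b j₁ (z1 b n (SMB.psivec b n hb0 N)))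
          + ∑ r₁ ∈ Finset.Icc (kdig b j₁ (z1 b n (SMB.psivec b n hb0 N)) + 1) (b-1),
              bexp b ℓ₁ r₁)
          * (1 - ((z2 b n s (SMB.psivec b n hb0 N) : ℝ):ℂ)) = F N := by
      intro N hN
      rw [SMB.z1_natOf hb0, SMB.natOf_psivec hb0 hN]
    have hrecon : ∀ t : Fin n → Fin b,
        (m₁ * b^(g+1) ≤ SMB.natOf b n t ∧ SMB.natOf b n t < (m₁+1) * b^(g+1)) →
        SMB.psivec b n hb0 (m₁ * b^(g+1) + SMB.natOf b n t % b^(g+1)) = t := by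
      intro t ⟨h1, h2⟩
      have hdiv : SMB.natOf b n t / b^(g+1) = m₁ :=
        Nat.div_eq_of_lt_le h1 (by rwa [Nat.succ_mul] at h2 ⊢)
      have heq : m₁ * b^(g+1) + SMB.natOf b n t % b^(g+1) = SMB.natOf b n t := by
        conv_rhs => rw [← Nat.div_add_mod (SMB.natOf b n t) (b^(g+1))]
        rw [hdiv, Nat.mul_comm]
      rw [heq, SMB.psivec_natOf hb0]
    have step1 : S13 b n s j₁ m₁ ℓ₁ = ∑ M ∈ range (b^(g+1)), F (m₁ * b^(g+1) + M) := by
      unfold S13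
      refine Finset.sum_nbij' (fun t => SMB.natOf b n t % b^(g+1))
        (fun M => SMB.psivec b n hb0 (m₁ * b^(g+1) + M)) ?_ ?_ ?_ ?_ ?_
      · intro t _
        exact mem_range.mpr (Nat.mod_lt _ hpow_g1)
      · intro M hM
        have hM' := mem_range.mp hM
        have hN := hNlt' M hM'
        refine mem_filter.mpr ⟨mem_univ _, ?_⟩
        rw [hcond, SMB.natOf_psivec hb0 hN]
        have h4 : (m₁+1)*b^(g+1) = m₁*b^(g+1) + b^(g+1) := by ring
        omega
      · intro t ht
        exact hrecon t ((hcond t).mp (mem_filter.mp ht).2)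
      · intro M hM
        have hM' := mem_range.mp hM
        show SMB.natOf b n (SMB.psivec b n hb0 (m₁ * b^(g+1) + M)) % b^(g+1) = M
        rw [SMB.natOf_psivec hb0 (hNlt' M hM'), Nat.add_comm, Nat.add_mul_mod_self_right,
          Nat.mod_eq_of_lt hM']
      · intro t ht
        have hr := hrecon t ((hcond t).mp (mem_filter.mp ht).2)
        conv_lhs => rw [← hr]
        exact hsummand _ (hNlt' _ (Nat.mod_lt _ hpow_g1))
    have hbg1 : b^(g+1) = b * b^g := pow_succ' b g
    have step2 : ∑ M ∈ range (b^(g+1)), F (m₁ * b^(g+1) + M)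
        = ∑ k ∈ range b, ∑ M' ∈ range (b^g), F (m₁ * b^(g+1) + (b^g * k + M')) := by
      rw [hbg1]
      exact SMB.sum_range_mul b (b^g) (fun m => F (m₁ * (b*b^g) + m))
    -- per-term simplification
    have step3 : ∀ k ∈ range b, ∀ M' ∈ range (b^g),
        F (m₁ * b^(g+1) + (b^g * k + M'))
          = ((1 - (M':ℂ)/(b:ℂ)^g) * x^k + (1 - x^(k+1))/(x-1))
            * (1 - (cR:ℂ)
              - (∑ i ∈ range g, ((s' i (SMB.dig b i M') : ℕ):ℂ)/(b:ℂ)^(i+1))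
              - ((s' g k : ℕ):ℂ)/(b:ℂ)^(g+1)) := by
      intro k hk M' hM'
      have hkb : k < b := mem_range.mp hk
      have hM'b : M' < b^g := mem_range.mp hM'
      have hNeq : m₁ * b^(g+1) + (b^g * k + M') = b^g * (b*m₁ + k) + M' := by
        rw [hbg1]; ring
      have hNlt : m₁ * b^(g+1) + (b^g * k + M') < b^n := by
        apply hNlt'
        have h1 : b^g*(k+1) ≤ b^g * b := Nat.mul_le_mul_left _ hkb
        have h2 : b^g*(k+1) = b^g*k + b^g := by ring
        have h3 : b^g * b = b * b^g := Nat.mul_comm _ _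
        omega
      have hdig_g : SMB.dig b g (m₁ * b^(g+1) + (b^g * k + M')) = k := by
        have h0 := SMB.dig_add_high hb0 (i := 0) (q := b*m₁+k) (r := M') hM'b
        rw [Nat.add_zero] at h0
        rw [hNeq, h0]
        show (b*m₁+k) / b^0 % b = k
        rw [pow_zero, Nat.div_one, Nat.mul_add_mod, Nat.mod_eq_of_lt hkb]
      have hdig_low : ∀ i, i < g → SMB.dig b i (m₁ * b^(g+1) + (b^g * k + M')) = SMB.dig b i M' := by
        intro i hi
        rw [hNeq, SMB.dig_add_low hb0 hi]
      have hdig_high : ∀ i, SMB.dig b (g+1+i) (m₁ * b^(g+1) + (b^g * k + M')) = SMB.dig b i m₁ := by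
        intro i
        rw [hNeq, show g+1+i = g+(1+i) from by omega, SMB.dig_add_high hb0 hM'b,
          show 1+i = i+1 from Nat.add_comm 1 i, SMB.dig_succ]
        congr 1
        rw [Nat.mul_add_div hb0, Nat.div_eq_of_lt hkb, Nat.add_zero]
      have hfrac1 : (M':ℝ)/(b:ℝ)^g < 1 := by
        rw [div_lt_one (by positivity)]
        exact_mod_cast hM'b
      have hfrac0 : (0:ℝ) ≤ (M':ℝ)/(b:ℝ)^g := by positivity
      have hNR : ((m₁ * b^(g+1) + (b^g * k + M') : ℕ):ℝ)
          = (b:ℝ)^g * ((b:ℝ)*(m₁:ℝ)+(k:ℝ)) + (M':ℝ) := by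
        push_cast
        ring
      have hbn2 : (b:ℝ)^(n:ℕ) = (b:ℝ)^(j₁+1) * (b:ℝ)^g := by
        rw [← pow_add]; congr 1; try omega
      have hreal : (b:ℝ)^(j₁+1) * (((m₁ * b^(g+1) + (b^g * k + M') : ℕ):ℝ)/(b:ℝ)^n) = ((b*m₁+k : ℕ):ℝ) + (M':ℝ)/(b:ℝ)^g := by
        rw [hbn2, hNR]
        push_cast
        field_simp
      have hkdig : kdig b j₁ (((m₁ * b^(g+1) + (b^g * k + M') : ℕ):ℝ)/(b:ℝ)^n) = k := by
        unfold kdig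
        have hfl : ⌊(b:ℝ)^(j₁+1) * (((m₁ * b^(g+1) + (b^g * k + M') : ℕ):ℝ)/(b:ℝ)^n)⌋ = ((b*m₁+k : ℕ):ℤ) := by
          rw [Int.floor_eq_iff, hreal]
          constructor
          · push_cast
            linarith
          · push_cast
            linarith
        rw [hfl, Int.toNat_natCast, Nat.mul_add_mod, Nat.mod_eq_of_lt hkb]
      have hIcc : ∑ r ∈ Finset.Icc (k+1) (b-1), bexp b ℓ₁ r = (1 - x^(k+1))/(x-1) := by
        rw [Finset.sum_congr rfl (fun r _ => SMB.bexp_eq (b := b) (ℓ := ℓ₁) r),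
          SMB.sum_tail_geom hb1 hx1 hkb, hxb]
        simp
      have hz2 : z2 b n s (SMB.psivec b n hb0 (m₁ * b^(g+1) + (b^g * k + M')))
          = (∑ i ∈ range g, ((s' i (SMB.dig b i M') : ℕ):ℝ)/(b:ℝ)^(i+1))
            + ((s' g k : ℕ):ℝ)/(b:ℝ)^(g+1) + cR := by
        rw [SMB.z2_eq]
        have h1 : ∀ i ∈ range n,
            ((SMB.sext n s i (SMB.dval (SMB.psivec b n hb0 (m₁ * b^(g+1) + (b^g * k + M'))) i) : ℕ):ℝ)/(b:ℝ)^(i+1)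
              = ((s' i (SMB.dig b i (m₁ * b^(g+1) + (b^g * k + M'))) : ℕ):ℝ)/(b:ℝ)^(i+1) := by
          intro i hi
          have hin := mem_range.mp hi
          rw [show SMB.dval (SMB.psivec b n hb0 (m₁ * b^(g+1) + (b^g * k + M'))) i = SMB.dig b i (m₁ * b^(g+1) + (b^g * k + M')) from by
            simp [SMB.dval, SMB.psivec, hin], hs'def]
        rw [Finset.sum_congr rfl h1, show n = (g+1) + j₁ from by omega,
          Finset.sum_range_add, Finset.sum_range_succ]
        congr 1
        · congr 1
          · exact Finset.sum_congr rfl fun i hi => by rw [hdig_low i (mem_range.mp hi)]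
          · rw [hdig_g]
        · rw [hcRdef]
          refine Finset.sum_congr rfl fun i hi => ?_
          rw [show (g+1)+i = g+1+i from rfl, hdig_high i, show g+1+i+1 = g+2+i from by omega]
      have h0 := congrArg (Complex.ofReal) hreal
      push_cast at h0
      simp only [hF]
      rw [hkdig, hIcc, hz2, SMB.bexp_eq]
      push_cast
      linear_combination (-(x^k) * (1 - (cR:ℂ)
        - (∑ i ∈ range g, ((s' i (SMB.dig b i M') : ℕ):ℂ)/(b:ℂ)^(i+1))
        - ((s' g k : ℕ):ℂ)/(b:ℂ)^(g+1))) * h0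
    have key : S13 b n s j₁ m₁ ℓ₁ = ∑ k ∈ range b, ∑ M' ∈ range (b^g),
        ((1 - (M':ℂ)/(b:ℂ)^g) * x^k + (1 - x^(k+1))/(x-1))
          * (1 - (cR:ℂ)
            - (∑ i ∈ range g, ((s' i (SMB.dig b i M') : ℕ):ℂ)/(b:ℂ)^(i+1))
            - ((s' g k : ℕ):ℂ)/(b:ℂ)^(g+1)) := by
      rw [step1, step2]
      exact Finset.sum_congr rfl fun k hk => Finset.sum_congr rfl (step3 k hk)
    have hbne1 : (b:ℂ) ≠ 1 := by
      intro h
      have hb1' : b = 1 := by exact_mod_cast h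
      omega
    have hΓ : ∑ M' ∈ range (b^g), (M':ℂ) = (b:ℂ)^g * ((b:ℂ)^g - 1)/2 := by
      have h := SMB.cast_gauss (b^g)
      push_cast at h
      exact h
    have hΩ : ∑ M' ∈ range (b^g),
        (∑ i ∈ range g, ((s' i (SMB.dig b i M') : ℕ):ℂ)/(b:ℂ)^(i+1))
          = ((b:ℂ)^g - 1)/2 := by
      rw [Finset.sum_comm]
      have hper : ∀ i ∈ range g,
          ∑ M' ∈ range (b^g), ((s' i (SMB.dig b i M') : ℕ):ℂ)/(b:ℂ)^(i+1)
            = (b:ℂ)^(g-1-i) * (((b:ℂ)-1)/2) := by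
        intro i hi
        have hig := mem_range.mp hi
        obtain ⟨a, ha⟩ : ∃ a, g = a + (i+1) := ⟨g - i - 1, by omega⟩
        have hsv : ∑ v ∈ range b, ((s' i v:ℕ):ℂ)/(b:ℂ)^(i+1)
            = (∑ v ∈ range b, (v:ℂ))/(b:ℂ)^(i+1) := by
          rw [Finset.sum_div]
          have hin : i < n := by omega
          rcases hs ⟨i, hin⟩ with hcase | hcase
          · refine Finset.sum_congr rfl fun v hv => ?_
            rw [hs'def]
            simp only [SMB.sext, dif_pos hin, hcase v (mem_range.mp hv)]
          · have h1 : ∀ v ∈ range b, ((s' i v:ℕ):ℂ)/(b:ℂ)^(i+1)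
                = (((b-1-v : ℕ)):ℂ)/(b:ℂ)^(i+1) := by
              intro v hv
              rw [hs'def]
              simp only [SMB.sext, dif_pos hin, hcase v (mem_range.mp hv)]
            rw [Finset.sum_congr rfl h1]
            exact Finset.sum_range_reflect (fun v => ((v:ℕ):ℂ)/(b:ℂ)^(i+1)) b
        rw [show b^g = b^(a+(i+1)) from by rw [← ha],
          SMB.sum_dig_block hb0 i a (fun v => ((s' i v : ℕ):ℂ)/(b:ℂ)^(i+1)), hsv,
          SMB.cast_gauss b, show g-1-i = a from by omega]
        have hbp : (b:ℂ)^(i+1) ≠ 0 := pow_ne_zero _ hbC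
        field_simp
        ring
      rw [Finset.sum_congr rfl hper,
        Finset.sum_range_reflect (fun j => (b:ℂ)^j * (((b:ℂ)-1)/2)) g, ← Finset.sum_mul,
        geom_sum_eq hbne1 g]
      have hb1ne : (b:ℂ) - 1 ≠ 0 := sub_ne_zero.mpr hbne1
      field_simp
      try ring
    set D1 : ℂ := ∑ M' ∈ range (b^g), (1 - (M':ℂ)/(b:ℂ)^g)
        * (1 - (cR:ℂ) - (∑ i ∈ range g, ((s' i (SMB.dig b i M') : ℕ):ℂ)/(b:ℂ)^(i+1)))
      with hD1
    have e1 : ∑ M' ∈ range (b^g), ((M':ℂ)/(b:ℂ)^g - 1)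
        = (b:ℂ)^g*((b:ℂ)^g-1)/2/(b:ℂ)^g - (b:ℂ)^g := by
      rw [Finset.sum_sub_distrib, ← Finset.sum_div, hΓ, Finset.sum_const, card_range,
        nsmul_eq_mul, mul_one]
      push_cast
      ring
    have e2 : ∑ M' ∈ range (b^g), ((1 - (cR:ℂ))
          - (∑ i ∈ range g, ((s' i (SMB.dig b i M') : ℕ):ℂ)/(b:ℂ)^(i+1)))
        = (b:ℂ)^g*(1-(cR:ℂ)) - ((b:ℂ)^g-1)/2 := by
      rw [Finset.sum_sub_distrib, hΩ, Finset.sum_const, card_range, nsmul_eq_mul]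
      push_cast
      ring
    have hinner : ∀ k ∈ range b, ∑ M' ∈ range (b^g),
        ((1 - (M':ℂ)/(b:ℂ)^g) * x^k + (1 - x^(k+1))/(x-1))
          * (1 - (cR:ℂ)
            - (∑ i ∈ range g, ((s' i (SMB.dig b i M') : ℕ):ℂ)/(b:ℂ)^(i+1))
            - ((s' g k : ℕ):ℂ)/(b:ℂ)^(g+1))
        = x^k * D1
          + (x^k * (((s' g k : ℕ):ℂ)/(b:ℂ)^(g+1)))
              * ((b:ℂ)^g*((b:ℂ)^g-1)/2/(b:ℂ)^g - (b:ℂ)^g)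
          + ((1 - x^(k+1))/(x-1)) * ((b:ℂ)^g*(1-(cR:ℂ)) - ((b:ℂ)^g-1)/2)
          - (((1 - x^(k+1))/(x-1)) * (((s' g k : ℕ):ℂ)/(b:ℂ)^(g+1))) * (b:ℂ)^g := by
      intro k hk
      have hexp : ∀ M' ∈ range (b^g),
          ((1 - (M':ℂ)/(b:ℂ)^g) * x^k + (1 - x^(k+1))/(x-1))
            * (1 - (cR:ℂ)
              - (∑ i ∈ range g, ((s' i (SMB.dig b i M') : ℕ):ℂ)/(b:ℂ)^(i+1))
              - ((s' g k : ℕ):ℂ)/(b:ℂ)^(g+1))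
          = x^k * ((1 - (M':ℂ)/(b:ℂ)^g)
                * (1 - (cR:ℂ) - (∑ i ∈ range g, ((s' i (SMB.dig b i M') : ℕ):ℂ)/(b:ℂ)^(i+1))))
            + (x^k * (((s' g k : ℕ):ℂ)/(b:ℂ)^(g+1))) * ((M':ℂ)/(b:ℂ)^g - 1)
            + ((1 - x^(k+1))/(x-1)) * ((1 - (cR:ℂ))
                - (∑ i ∈ range g, ((s' i (SMB.dig b i M') : ℕ):ℂ)/(b:ℂ)^(i+1)))
            - ((1 - x^(k+1))/(x-1)) * (((s' g k : ℕ):ℂ)/(b:ℂ)^(g+1)) := by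
        intro M' _
        ring
      rw [Finset.sum_congr rfl hexp, Finset.sum_sub_distrib, Finset.sum_add_distrib,
        Finset.sum_add_distrib, ← Finset.mul_sum, ← Finset.mul_sum, ← Finset.mul_sum,
        Finset.sum_const, card_range, nsmul_eq_mul, e1, e2, hD1]
      push_cast
      ring
    have houter : S13 b n s j₁ m₁ ℓ₁
        = (∑ k ∈ range b, x^k) * D1
          + (∑ k ∈ range b, x^k * (((s' g k:ℕ):ℂ)/(b:ℂ)^(g+1)))
              * ((b:ℂ)^g*((b:ℂ)^g-1)/2/(b:ℂ)^g - (b:ℂ)^g)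
          + (∑ k ∈ range b, (1 - x^(k+1))/(x-1)) * ((b:ℂ)^g*(1-(cR:ℂ)) - ((b:ℂ)^g-1)/2)
          - (∑ k ∈ range b, ((1 - x^(k+1))/(x-1)) * (((s' g k:ℕ):ℂ)/(b:ℂ)^(g+1))) * (b:ℂ)^g := by
      rw [key, Finset.sum_congr rfl hinner, Finset.sum_sub_distrib, Finset.sum_add_distrib,
        Finset.sum_add_distrib, ← Finset.sum_mul, ← Finset.sum_mul, ← Finset.sum_mul,
        ← Finset.sum_mul]
    have hTsum : ∑ k ∈ range b, (1 - x^(k+1))/(x-1) = (b:ℂ)/(x-1) := by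
      have h1 : ∀ k ∈ range b, (1 - x^(k+1))/(x-1) = 1/(x-1) - x^k * (x/(x-1)) := by
        intro k _
        rw [pow_succ]
        ring
      rw [Finset.sum_congr rfl h1, Finset.sum_sub_distrib, ← Finset.sum_mul, hgeom0,
        Finset.sum_const, card_range, nsmul_eq_mul]
      ring
    have hzpow1 : (b:ℂ)^((n:ℤ)-(j₁:ℤ)) = (b:ℂ)^(g+1) := by
      rw [show (n:ℤ) - (j₁:ℤ) = ((g+1:ℕ):ℤ) from by push_cast; omega, zpow_natCast]
    have hzpow2 : (b:ℂ)^((j₁:ℤ)-(n:ℤ)+1) = ((b:ℂ)^g)⁻¹ := by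
      rw [show (j₁:ℤ)-(n:ℤ)+1 = -((g:ℕ):ℤ) from by push_cast; omega, zpow_neg, zpow_natCast]
    have hgn : g < n := by omega
    have hbg1C : (b:ℂ)^(g+1) = (b:ℂ) * (b:ℂ)^g := pow_succ' (b:ℂ) g
    have hBg : (b:ℂ)^g ≠ 0 := pow_ne_zero _ hbC
    rcases hs ⟨g, hgn⟩ with hid | href
    · -- identity case: first alternative
      have hWk : ∀ k ∈ range b, ((s' g k : ℕ):ℂ) = (k:ℂ) := by
        intro k hk
        rw [hs'def]
        simp only [SMB.sext, dif_pos hgn, hid k (mem_range.mp hk)]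
      have hσ1 : ∑ k ∈ range b, x^k * (((s' g k:ℕ):ℂ)/(b:ℂ)^(g+1))
          = ((b:ℂ)/(x-1)) * (1/(b:ℂ)^(g+1)) := by
        have h1 : ∀ k ∈ range b, x^k * (((s' g k:ℕ):ℂ)/(b:ℂ)^(g+1))
            = ((k:ℂ)*x^k) * (1/(b:ℂ)^(g+1)) := by
          intro k hk
          rw [hWk k hk]
          ring
        rw [Finset.sum_congr rfl h1, ← Finset.sum_mul, hkx]
      have hσ2 : ∑ k ∈ range b, ((1 - x^(k+1))/(x-1)) * (((s' g k:ℕ):ℂ)/(b:ℂ)^(g+1))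
          = ((b:ℂ)*((b:ℂ)-1)/2) * (1/((x-1)*(b:ℂ)^(g+1)))
            - ((b:ℂ)/(x-1)) * (x/((x-1)*(b:ℂ)^(g+1))) := by
        have h1 : ∀ k ∈ range b, ((1 - x^(k+1))/(x-1)) * (((s' g k:ℕ):ℂ)/(b:ℂ)^(g+1))
            = (k:ℂ) * (1/((x-1)*(b:ℂ)^(g+1))) - ((k:ℂ)*x^k) * (x/((x-1)*(b:ℂ)^(g+1))) := by
          intro k hk
          rw [hWk k hk, pow_succ]
          have hbp : (b:ℂ)^(g+1) ≠ 0 := pow_ne_zero _ hbC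
          field_simp
        rw [Finset.sum_congr rfl h1, Finset.sum_sub_distrib, ← Finset.sum_mul,
          ← Finset.sum_mul, SMB.cast_gauss b, hkx]
      refine Or.inl ?_
      rw [houter, hgeom0, hσ1, hσ2, hTsum, hzpow1, hzpow2, hbg1C]
      linear_combination SMBfinal_id1 x ((b:ℂ)^g) (b:ℂ) ((cR:ℝ):ℂ) D1 hx1' hBg hbC
    · -- reflection case: second alternative
      have hWk : ∀ k ∈ range b, ((s' g k : ℕ):ℂ) = (b:ℂ) - 1 - (k:ℂ) := by
        intro k hk
        have hkb := mem_range.mp hk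
        rw [hs'def]
        simp only [SMB.sext, dif_pos hgn, href k hkb]
        push_cast [Nat.cast_sub (show k ≤ b-1 from by omega), Nat.cast_sub hb1]
        ring
      have hσ1 : ∑ k ∈ range b, x^k * (((s' g k:ℕ):ℂ)/(b:ℂ)^(g+1))
          = -(((b:ℂ)/(x-1)) * (1/(b:ℂ)^(g+1))) := by
        have h1 : ∀ k ∈ range b, x^k * (((s' g k:ℕ):ℂ)/(b:ℂ)^(g+1))
            = x^k * (((b:ℂ)-1)/(b:ℂ)^(g+1)) - ((k:ℂ)*x^k) * (1/(b:ℂ)^(g+1)) := by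
          intro k hk
          rw [hWk k hk]
          ring
        rw [Finset.sum_congr rfl h1, Finset.sum_sub_distrib, ← Finset.sum_mul,
          ← Finset.sum_mul, hgeom0, hkx]
        ring
      have hσ2 : ∑ k ∈ range b, ((1 - x^(k+1))/(x-1)) * (((s' g k:ℕ):ℂ)/(b:ℂ)^(g+1))
          = ((b:ℂ)*((b:ℂ)-1)/2) * (1/((x-1)*(b:ℂ)^(g+1)))
            + ((b:ℂ)/(x-1)) * (x/((x-1)*(b:ℂ)^(g+1))) := by
        have h1 : ∀ k ∈ range b, ((1 - x^(k+1))/(x-1)) * (((s' g k:ℕ):ℂ)/(b:ℂ)^(g+1))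
            = ((b:ℂ)-1) * (1/((x-1)*(b:ℂ)^(g+1))) - (k:ℂ) * (1/((x-1)*(b:ℂ)^(g+1)))
              - x^k * (((b:ℂ)-1)*x/((x-1)*(b:ℂ)^(g+1)))
              + ((k:ℂ)*x^k) * (x/((x-1)*(b:ℂ)^(g+1))) := by
          intro k hk
          rw [hWk k hk, pow_succ]
          have hbp : (b:ℂ)^(g+1) ≠ 0 := pow_ne_zero _ hbC
          field_simp
          ring
        rw [Finset.sum_congr rfl h1, Finset.sum_add_distrib, Finset.sum_sub_distrib,
          Finset.sum_sub_distrib, Finset.sum_const, card_range, nsmul_eq_mul,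
          ← Finset.sum_mul, ← Finset.sum_mul, ← Finset.sum_mul, SMB.cast_gauss b,
          hgeom0, hkx]
        push_cast
        ring
      refine Or.inr ?_
      rw [houter, hgeom0, hσ1, hσ2, hTsum, hzpow1, hzpow2, hbg1C]
      linear_combination SMBfinal_id2 x ((b:ℂ)^g) (b:ℂ) ((cR:ℝ):ℂ) D1 hx1' hBg hbC
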